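/- Let Λ ⊂ ℝ^d be a lattice and F: ℝ^d → [0,∞] be Λ-periodic, and suppose g ∈ L²(ℝ^d/Λ) is continuous with absolutely summable Fourier coefficients, ĝ_v ≥ 0 for all v ∈ Λ*\{0}, and g ≤ F pointwise. If ω_n is an n-point configuration such that g(x-y) = F(x-y) for all distinct x,y ∈ ω_n, and ĝ_v · ∑_{x∈ω_n} e^{2πi v·x} = 0 for all v ∈ Λ*\{0}, then E_F(ω_n) = n²ĝ_0 - n g(0) and ω_n minimizes E_F among all n-point configurations in ℝ^d. -/

import Mathlib

open Complex Finset

private lemma ecoe_fsum {α : Type*} (s : Finset α) (f : α → ℝ) :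
    ((∑ i ∈ s, f i : ℝ) : EReal) = ∑ i ∈ s, ((f i : ℝ) : EReal) := by
  induction s using Finset.cons_induction with
  | empty => simp
  | cons a s ha ih => rw [Finset.sum_cons, Finset.sum_cons, EReal.coe_add, ih]

private lemma cexp_enorm_one (v z : Fin d → ℝ) :
    ‖Complex.exp (2 * Real.pi * Complex.I * (dotProduct v z : ℝ))‖ = 1 := by
  have h : (2 * Real.pi * Complex.I * (dotProduct v z : ℝ))
      = ((2 * Real.pi * dotProduct v z : ℝ) : ℂ) * Complex.I := by
    push_cast; ring
  rw [h, Complex.norm_exp_ofReal_mul_I]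

private lemma exp_split (v a b : Fin d → ℝ) :
    Complex.exp (2 * Real.pi * Complex.I * (dotProduct v (a - b) : ℝ))
      = Complex.exp (2 * Real.pi * Complex.I * (dotProduct v a : ℝ)) *
        (starRingEnd ℂ) (Complex.exp (2 * Real.pi * Complex.I * (dotProduct v b : ℝ))) := by
  rw [← Complex.exp_conj, ← Complex.exp_add]
  congr 1
  rw [dotProduct_sub v a b]
  simp only [map_mul, Complex.conj_I, Complex.conj_ofReal, map_ofNat]
  push_cast
  ring

/-- Key identity: double sum of g over a configuration equals the quadratic-form tsum. -/
private lemma sharp_key {d n : ℕ} {D : Set (Fin d → ℝ)} {gh : (Fin d → ℝ) → ℝ}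
    (hsum : Summable fun v : D => |gh (v : Fin d → ℝ)|)
    {g : (Fin d → ℝ) → ℝ}
    (hg : ∀ y : Fin d → ℝ, (g y : ℂ) = ∑' v : D, (gh (v : Fin d → ℝ) : ℂ) *
      Complex.exp (2 * Real.pi * Complex.I * (dotProduct (v : Fin d → ℝ) y : ℝ)))
    (y : Fin n → Fin d → ℝ) :
    ∑ i, ∑ j, g (y i - y j) = ∑' v : D, gh (v : Fin d → ℝ) *
      Complex.normSq (∑ i, Complex.exp ((2 : ℂ) * (Real.pi : ℂ) * Complex.I *
        ((dotProduct (v : Fin d → ℝ) (y i) : ℝ) : ℂ))) := by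
  set e : (Fin d → ℝ) → (Fin d → ℝ) → ℂ :=
    fun v z => Complex.exp (2 * Real.pi * Complex.I * (dotProduct v z : ℝ)) with he
  have hsummable : ∀ z : Fin d → ℝ, Summable (fun v : D => (gh ↑v : ℂ) * e ↑v z) := by
    intro z
    apply Summable.of_norm
    have : (fun v : D => ‖(gh (v : Fin d → ℝ) : ℂ) * e ↑v z‖)
        = fun v : D => |gh (v : Fin d → ℝ)| := by
      funext v
      rw [norm_mul, he, cexp_enorm_one, mul_one, Complex.norm_real, Real.norm_eq_abs]
    rw [this]; exact hsum
  have key : ((∑ i, ∑ j, g (y i - y j) : ℝ) : ℂ)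
      = ((∑' v : D, gh (v : Fin d → ℝ) * Complex.normSq (∑ i, e ↑v (y i)) : ℝ) : ℂ) := by
    rw [Complex.ofReal_tsum]
    push_cast
    calc ∑ i, ∑ j, ((g (y i - y j) : ℝ) : ℂ)
        = ∑ i, ∑ j, ∑' v : D, (gh ↑v : ℂ) * e ↑v (y i - y j) :=
          Finset.sum_congr rfl fun i _ => Finset.sum_congr rfl fun j _ => hg _
      _ = ∑ i, ∑' v : D, ∑ j, (gh ↑v : ℂ) * e ↑v (y i - y j) :=
          Finset.sum_congr rfl fun i _ => (Summable.tsum_finsetSum fun j _ => hsummable _).symm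
      _ = ∑' v : D, ∑ i, ∑ j, (gh ↑v : ℂ) * e ↑v (y i - y j) :=
          (Summable.tsum_finsetSum fun i _ => summable_sum fun j _ => hsummable _).symm
      _ = ∑' v : D, (gh (v : Fin d → ℝ) : ℂ) *
            ((Complex.normSq (∑ i, e ↑v (y i)) : ℝ) : ℂ) := by
          refine tsum_congr fun v => ?_
          calc ∑ i, ∑ j, (gh (v : Fin d → ℝ) : ℂ) * e ↑v (y i - y j)
              = ∑ i, ∑ j, (gh (v : Fin d → ℝ) : ℂ) *
                  (e ↑v (y i) * (starRingEnd ℂ) (e ↑v (y j))) :=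
                Finset.sum_congr rfl fun i _ => Finset.sum_congr rfl fun j _ => by
                  rw [he]; exact congrArg _ (exp_split _ _ _)
            _ = (gh (v : Fin d → ℝ) : ℂ) *
                  ((∑ i, e ↑v (y i)) * ∑ j, (starRingEnd ℂ) (e ↑v (y j))) := by
                rw [Fintype.sum_mul_sum, Finset.mul_sum]
                exact Finset.sum_congr rfl fun i _ => (Finset.mul_sum _ _ _).symm
            _ = (gh (v : Fin d → ℝ) : ℂ) *
                  ((∑ i, e ↑v (y i)) * (starRingEnd ℂ) (∑ j, e ↑v (y j))) := by
                rw [map_sum]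
            _ = (gh (v : Fin d → ℝ) : ℂ) *
                  ((Complex.normSq (∑ i, e ↑v (y i)) : ℝ) : ℂ) := by
                rw [Complex.mul_conj]
  simp only [he] at key
  exact_mod_cast key

theorem stmt_4 (d n : ℕ) (V : Matrix (Fin d) (Fin d) ℝ) (hV : IsUnit V.det)
    (L : Set (Fin d → ℝ))
    (hL : L = {w | ∃ k : Fin d → ℤ, w = V.mulVec fun i => (k i : ℝ)})
    (D : Set (Fin d → ℝ))
    (hD : D = {v | ∀ w ∈ L, ∃ m : ℤ, dotProduct v w = (m : ℝ)})
    (F : (Fin d → ℝ) → EReal) (hF0 : ∀ y, 0 ≤ F y)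
    (hFper : ∀ y : Fin d → ℝ, ∀ v ∈ L, F (y + v) = F y)
    (gh : (Fin d → ℝ) → ℝ)
    (hsupp : ∀ v ∉ D, gh v = 0)
    (hsum : Summable fun v : D => |gh (v : Fin d → ℝ)|)
    (hpos : ∀ v ∈ D, v ≠ 0 → 0 ≤ gh v)
    (g : (Fin d → ℝ) → ℝ)
    (hg : ∀ y : Fin d → ℝ, (g y : ℂ) = ∑' v : D, (gh (v : Fin d → ℝ) : ℂ) *
      Complex.exp (2 * Real.pi * Complex.I * (dotProduct (v : Fin d → ℝ) y : ℝ)))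
    (hgF : ∀ y, (g y : EReal) ≤ F y)
    (x : Fin n → Fin d → ℝ)
    (htouch : ∀ i j : Fin n, i ≠ j → (g (x i - x j) : EReal) = F (x i - x j))
    (hmom : ∀ v ∈ D, v ≠ 0 → (gh v : ℂ) *
      ∑ i, Complex.exp (2 * Real.pi * Complex.I * (dotProduct v (x i) : ℝ)) = 0) :
    (∑ i, ∑ j, if i ≠ j then F (x i - x j) else 0)
        = (((n : ℝ) ^ 2 * gh 0 - (n : ℝ) * g 0 : ℝ) : EReal) ∧
    ∀ y : Fin n → Fin d → ℝ,
      (∑ i, ∑ j, if i ≠ j then F (x i - x j) else 0) ≤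
        ∑ i, ∑ j, if i ≠ j then F (y i - y j) else 0 := by
  classical
  have h0D : (0 : Fin d → ℝ) ∈ D := by
    rw [hD]
    intro w _
    exact ⟨0, by simp [zero_dotProduct]⟩
  set v0 : D := ⟨0, h0D⟩ with hv0
  set S : (Fin n → Fin d → ℝ) → D → ℂ := fun y v =>
    ∑ i, Complex.exp (2 * Real.pi * Complex.I *
      (dotProduct (v : Fin d → ℝ) (y i) : ℝ)) with hS
  set fR : (Fin n → Fin d → ℝ) → D → ℝ := fun y v =>
    gh (v : Fin d → ℝ) * Complex.normSq (S y v) with hfR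
  -- summability of fR y
  have hSle : ∀ y v, Complex.normSq (S y v) ≤ (n : ℝ) ^ 2 := by
    intro y v
    have h1 : ‖S y v‖ ≤ (n : ℝ) := by
      calc ‖S y v‖ ≤ ∑ i : Fin n, ‖Complex.exp (2 * Real.pi * Complex.I *
            (dotProduct (v : Fin d → ℝ) (y i) : ℝ))‖ := norm_sum_le _ _
        _ = ∑ _i : Fin n, (1 : ℝ) := Finset.sum_congr rfl fun i _ => cexp_enorm_one _ _
        _ = (n : ℝ) := by simp
    have h2 : Complex.normSq (S y v) = ‖S y v‖ ^ 2 := by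
      rw [← Complex.sq_norm]
    rw [h2]
    exact pow_le_pow_left₀ (norm_nonneg _) h1 2
  have hfRsum : ∀ y, Summable (fR y) := by
    intro y
    apply Summable.of_norm_bounded (hsum.mul_right ((n : ℝ) ^ 2))
    intro v
    rw [Real.norm_eq_abs, hfR, abs_mul, _root_.abs_of_nonneg (Complex.normSq_nonneg _)]
    exact mul_le_mul_of_nonneg_left (hSle y v) (abs_nonneg _)
  have hfR0 : ∀ y, fR y v0 = gh 0 * (n : ℝ) ^ 2 := by
    intro y
    have hS0 : S y v0 = (n : ℂ) := by
      simp [hS, hv0, zero_dotProduct]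
    rw [hfR]
    simp only [hS0]; simp only [hv0]
    rw [show ((n : ℕ) : ℂ) = (((n : ℝ)) : ℂ) by push_cast; rfl, Complex.normSq_ofReal]
    ring_nf
  have hsplit : ∀ y, ∑' v, fR y v
      = gh 0 * (n : ℝ) ^ 2 + ∑' v, if v = v0 then 0 else fR y v := by
    intro y
    rw [Summable.tsum_eq_add_tsum_ite (hfRsum y) v0, hfR0]
  -- diagonal split of double sum
  have hdiag : ∀ y : Fin n → Fin d → ℝ, ∑ i, ∑ j, g (y i - y j)
      = (∑ i, ∑ j, if i ≠ j then g (y i - y j) else 0) + (n : ℝ) * g 0 := by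
    intro y
    have h : ∀ i j : Fin n, g (y i - y j)
        = (if i ≠ j then g (y i - y j) else 0) + (if i = j then g 0 else 0) := by
      intro i j
      by_cases h : i = j <;> simp [h]
    calc ∑ i, ∑ j, g (y i - y j)
        = ∑ i, ∑ j, ((if i ≠ j then g (y i - y j) else 0) + (if i = j then g 0 else 0)) := by
          exact Finset.sum_congr rfl fun i _ => Finset.sum_congr rfl fun j _ => h i j
      _ = (∑ i, ∑ j, if i ≠ j then g (y i - y j) else 0) + (n : ℝ) * g 0 := by
          simp only [Finset.sum_add_distrib]
          congr 1
          simp [Finset.sum_ite_eq, mul_comm]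
  -- lower bound for any configuration
  have hlow : ∀ y : Fin n → Fin d → ℝ, (n : ℝ) ^ 2 * gh 0 - (n : ℝ) * g 0
      ≤ ∑ i, ∑ j, if i ≠ j then g (y i - y j) else 0 := by
    intro y
    have h1 := sharp_key hsum hg y
    have h2 := hsplit y
    have h3 : (0 : ℝ) ≤ ∑' v, if v = v0 then 0 else fR y v := by
      refine tsum_nonneg fun v => ?_
      by_cases hv : v = v0
      · simp [hv]
      · have hne : (v : Fin d → ℝ) ≠ 0 := fun h => hv (Subtype.ext h)
        simp only [hv, if_false]
        exact mul_nonneg (hpos _ v.2 hne) (Complex.normSq_nonneg _)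
    have h4 := hdiag y
    rw [h4, h2] at h1
    linarith
  -- exact value at x
  have hxval : ∑ i, ∑ j, (if i ≠ j then g (x i - x j) else 0)
      = (n : ℝ) ^ 2 * gh 0 - (n : ℝ) * g 0 := by
    have h1 := sharp_key hsum hg x
    have h2 := hsplit x
    have h3 : (∑' v, if v = v0 then 0 else fR x v) = 0 := by
      have hz : (fun v : D => if v = v0 then 0 else fR x v) = fun _ => (0 : ℝ) := by
        funext v
        by_cases hv : v = v0
        · simp [hv]
        · have hne : (v : Fin d → ℝ) ≠ 0 := fun h => hv (Subtype.ext h)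
          have := hmom (v : Fin d → ℝ) v.2 hne
          simp only [hv, if_false, hfR]
          rcases mul_eq_zero.mp this with h | h
          · rw [Complex.ofReal_eq_zero.mp h, zero_mul]
          · rw [show S x v = 0 from h]
            simp
      rw [hz, tsum_zero]
    rw [hdiag x, h2, h3, add_zero] at h1
    linarith
  -- EReal: value of the F-energy at x
  have hEx : (∑ i, ∑ j, if i ≠ j then F (x i - x j) else 0)
      = (((n : ℝ) ^ 2 * gh 0 - (n : ℝ) * g 0 : ℝ) : EReal) := by
    have hterm : ∀ i j : Fin n, (if i ≠ j then F (x i - x j) else 0)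
        = (((if i ≠ j then g (x i - x j) else 0 : ℝ)) : EReal) := by
      intro i j
      by_cases h : i = j
      · simp [h]
      · simp only [h, ne_eq, not_false_eq_true, if_true]
        exact (htouch i j h).symm
    calc ∑ i, ∑ j, (if i ≠ j then F (x i - x j) else 0)
        = ∑ i, ∑ j, (((if i ≠ j then g (x i - x j) else 0 : ℝ)) : EReal) :=
          Finset.sum_congr rfl fun i _ => Finset.sum_congr rfl fun j _ => hterm i j
      _ = ((∑ i, ∑ j, (if i ≠ j then g (x i - x j) else 0) : ℝ) : EReal) := by
          rw [ecoe_fsum]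
          exact Finset.sum_congr rfl fun i _ => (ecoe_fsum _ _).symm
      _ = (((n : ℝ) ^ 2 * gh 0 - (n : ℝ) * g 0 : ℝ) : EReal) := by rw [hxval]
  refine ⟨hEx, fun y => ?_⟩
  rw [hEx]
  calc (((n : ℝ) ^ 2 * gh 0 - (n : ℝ) * g 0 : ℝ) : EReal)
      ≤ ((∑ i, ∑ j, (if i ≠ j then g (y i - y j) else 0) : ℝ) : EReal) :=
        EReal.coe_le_coe_iff.mpr (hlow y)
    _ = ∑ i, ∑ j, (((if i ≠ j then g (y i - y j) else 0 : ℝ)) : EReal) := by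
        rw [ecoe_fsum]
        exact Finset.sum_congr rfl fun i _ => ecoe_fsum _ _
    _ ≤ ∑ i, ∑ j, (if i ≠ j then F (y i - y j) else 0) := by
        refine Finset.sum_le_sum fun i _ => Finset.sum_le_sum fun j _ => ?_
        by_cases h : i = j
        · simp [h]
        · simp only [h, ne_eq, not_false_eq_true, if_true]
          exact hgF _
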